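/- Let V be the n×n Vandermonde matrix with entries d_j^(i-1) for pairwise distinct real nodes d_1, …, d_n, and let W be the (S+1)×n matrix with entries d_j^(i-1), i = 1, …, S+1, where S > n−1. Then the minimum singular value of W satisfies σ_min(W) ≥ σ_min(V) ≥ (1/√n) · min over 1 ≤ i ≤ n of the product over p ≠ i of |d_i − d_p|/(1 + |d_p|). -/

import Mathlib

open Matrix

/-- The minimum singular value of a real matrix: the infimum of `‖A x‖₂` over Euclidean
unit vectors `x`. -/
noncomputable def sMin {m n : ℕ} (A : Matrix (Fin m) (Fin n) ℝ) : ℝ :=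
  sInf {r : ℝ | ∃ x : Fin n → ℝ, (∑ j, (x j) ^ 2) = 1 ∧
    r = Real.sqrt (∑ i, (A.mulVec x i) ^ 2)}

section AuxStmt6
open Polynomial Finset

lemma shift_abs_sum (P : ℝ[X]) (N : ℕ) :
    ∑ i ∈ Finset.range N, |(X * P).coeff i| ≤ ∑ i ∈ Finset.range N, |P.coeff i| := by
  cases N with
  | zero => simp
  | succ M =>
    rw [Finset.sum_range_succ']
    simp only [coeff_X_mul]
    have h0 : (X * P).coeff 0 = 0 := by
      rw [mul_coeff_zero, coeff_X_zero, zero_mul]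
    rw [h0, abs_zero, add_zero]
    exact Finset.sum_le_sum_of_subset_of_nonneg
      (Finset.range_subset_range.mpr (Nat.le_succ M)) (fun i _ _ => abs_nonneg _)

lemma absCoeffSum_prod {ι : Type*} [DecidableEq ι] (t : Finset ι) (d : ι → ℝ) (N : ℕ) :
    ∑ i ∈ Finset.range N, |(∏ p ∈ t, (X - C (d p))).coeff i| ≤ ∏ p ∈ t, (1 + |d p|) := by
  induction t using Finset.induction_on generalizing N with
  | empty =>
    simp only [Finset.prod_empty, Polynomial.coeff_one]
    cases N with
    | zero => simp
    | succ M =>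
      have h1 : ∀ i ∈ Finset.range (M + 1), |(if i = 0 then (1:ℝ) else 0)| =
          if i = 0 then (1:ℝ) else 0 := by
        intro i _
        by_cases h : i = 0 <;> simp [h]
      rw [Finset.sum_congr rfl h1, Finset.sum_ite_eq' (Finset.range (M+1)) 0 (fun _ => (1:ℝ))]
      simp
  | insert _ _ ha ih =>
    rename_i a t
    rw [Finset.prod_insert ha, Finset.prod_insert ha]
    set P := ∏ p ∈ t, (X - C (d p)) with hP
    have hc : ∀ i, |((X - C (d a)) * P).coeff i| ≤ |(X * P).coeff i| + |d a| * |P.coeff i| := by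
      intro i
      have : ((X - C (d a)) * P).coeff i = (X * P).coeff i - d a * P.coeff i := by
        rw [sub_mul, coeff_sub, coeff_C_mul]
      rw [this]
      calc |(X * P).coeff i - d a * P.coeff i| ≤ |(X * P).coeff i| + |d a * P.coeff i| :=
            abs_sub _ _
        _ = |(X * P).coeff i| + |d a| * |P.coeff i| := by rw [abs_mul]
    calc ∑ i ∈ Finset.range N, |((X - C (d a)) * P).coeff i|
        ≤ ∑ i ∈ Finset.range N, (|(X * P).coeff i| + |d a| * |P.coeff i|) :=
          Finset.sum_le_sum fun i _ => hc i
      _ = (∑ i ∈ Finset.range N, |(X * P).coeff i|) + |d a| * ∑ i ∈ Finset.range N, |P.coeff i| := by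
          rw [Finset.sum_add_distrib, Finset.mul_sum]
      _ ≤ (∑ i ∈ Finset.range N, |P.coeff i|) + |d a| * ∑ i ∈ Finset.range N, |P.coeff i| := by
          have := shift_abs_sum P N
          have h2 : (0:ℝ) ≤ |d a| := abs_nonneg _
          nlinarith [Finset.sum_le_sum (fun i (_ : i ∈ Finset.range N) => le_refl |P.coeff i|)]
      _ = (1 + |d a|) * ∑ i ∈ Finset.range N, |P.coeff i| := by ring
      _ ≤ (1 + |d a|) * ∏ p ∈ t, (1 + |d p|) := by
          apply mul_le_mul_of_nonneg_left (ih N)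
          positivity

lemma basis_eq_C_mul {ι : Type*} [DecidableEq ι] (s : Finset ι) (v : ι → ℝ) (i : ι) :
    Lagrange.basis s v i =
      C (∏ j ∈ s.erase i, (v i - v j)⁻¹) * ∏ j ∈ s.erase i, (X - C (v j)) := by
  rw [Lagrange.basis]
  simp_rw [Lagrange.basisDivisor]
  rw [Finset.prod_mul_distrib, map_prod]

end AuxStmt6

/-- For the square Vandermonde matrix `V` and its rectangular extension `W` (powers up to `S`,
`S > n - 1`) with pairwise distinct nodes, one has
`σ_min(W) ≥ σ_min(V) ≥ (1/√n)·min_i ∏_{p ≠ i} |d i - d p| / (1 + |d p|)`. -/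
theorem stmt_6 (n S : ℕ) (hn : 0 < n) (hS : n - 1 < S) (d : Fin n → ℝ)
    (hd : Function.Injective d) :
    sMin (Matrix.of fun i j : Fin n => d j ^ (i : ℕ)) ≤
        sMin (Matrix.of fun (i : Fin (S + 1)) (j : Fin n) => d j ^ (i : ℕ)) ∧
      (1 / Real.sqrt n) * Finset.univ.inf' ⟨⟨0, hn⟩, Finset.mem_univ _⟩
          (fun i => ∏ p ∈ Finset.univ.erase i, |d i - d p| / (1 + |d p|)) ≤
        sMin (Matrix.of fun i j : Fin n => d j ^ (i : ℕ)) := by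
  classical
  set A : Set ℝ := {r : ℝ | ∃ x : Fin n → ℝ, (∑ j, (x j) ^ 2) = 1 ∧
    r = Real.sqrt (∑ i : Fin n,
      ((Matrix.of fun i j : Fin n => d j ^ (i : ℕ)).mulVec x i) ^ 2)} with hA
  set B : Set ℝ := {r : ℝ | ∃ x : Fin n → ℝ, (∑ j, (x j) ^ 2) = 1 ∧
    r = Real.sqrt (∑ i : Fin (S + 1),
      ((Matrix.of fun (i : Fin (S + 1)) (j : Fin n) => d j ^ (i : ℕ)).mulVec x i) ^ 2)} with hB
  have i0 : Fin n := ⟨0, hn⟩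
  have x0unit : (∑ j : Fin n, ((fun k : Fin n => if k = i0 then (1:ℝ) else 0) j) ^ 2) = 1 := by
    simp [Finset.sum_ite_eq']
  have hAne : A.Nonempty := ⟨_, ⟨_, x0unit, rfl⟩⟩
  have hBne : B.Nonempty := ⟨_, ⟨_, x0unit, rfl⟩⟩
  have hAbdd : BddBelow A := by
    refine ⟨0, ?_⟩
    rintro r ⟨x, _, rfl⟩
    exact Real.sqrt_nonneg _
  have hnS : n ≤ S + 1 := by omega
  constructor
  · apply le_csInf hBne
    rintro b ⟨x, hx, rfl⟩
    refine le_trans (csInf_le hAbdd ⟨x, hx, rfl⟩) ?_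
    apply Real.sqrt_le_sqrt
    have h1 : ∑ i : Fin n,
        ((Matrix.of fun i j : Fin n => d j ^ (i : ℕ)).mulVec x i) ^ 2 =
        ∑ i ∈ Finset.range n, (∑ j : Fin n, d j ^ i * x j) ^ 2 := by
      rw [← Fin.sum_univ_eq_sum_range (fun i => (∑ j : Fin n, d j ^ i * x j) ^ 2) n]
      simp [Matrix.mulVec, dotProduct]
    have h2 : ∑ i : Fin (S + 1),
        ((Matrix.of fun (i : Fin (S + 1)) (j : Fin n) => d j ^ (i : ℕ)).mulVec x i) ^ 2 =
        ∑ i ∈ Finset.range (S + 1), (∑ j : Fin n, d j ^ i * x j) ^ 2 := by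
      rw [← Fin.sum_univ_eq_sum_range (fun i => (∑ j : Fin n, d j ^ i * x j) ^ 2) (S + 1)]
      simp [Matrix.mulVec, dotProduct]
    rw [h1, h2]
    exact Finset.sum_le_sum_of_subset_of_nonneg (Finset.range_subset_range.mpr hnS)
      (fun i _ _ => sq_nonneg _)
  · set f : Fin n → ℝ := fun i => ∏ p ∈ Finset.univ.erase i, |d i - d p| / (1 + |d p|) with hf
    set m : ℝ := Finset.univ.inf' ⟨⟨0, hn⟩, Finset.mem_univ _⟩ f with hm
    set c : Fin n → ℝ := fun j => ∏ p ∈ Finset.univ.erase j, (1 + |d p|) / |d j - d p| with hc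
    have hcpos : ∀ j, 0 < c j := by
      intro j
      apply Finset.prod_pos
      intro p hp
      have hne : d j ≠ d p := fun h => (Finset.mem_erase.mp hp).1.symm (hd h)
      have := abs_pos.mpr (sub_ne_zero.mpr hne)
      positivity
    have hfc : ∀ j, f j = (c j)⁻¹ := by
      intro j
      refine eq_inv_of_mul_eq_one_right ?_
      show (∏ p ∈ Finset.univ.erase j, (1 + |d p|) / |d j - d p|) *
        (∏ p ∈ Finset.univ.erase j, |d j - d p| / (1 + |d p|)) = 1
      rw [← Finset.prod_mul_distrib]
      apply Finset.prod_eq_one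
      intro p hp
      have hne : d j ≠ d p := fun h => (Finset.mem_erase.mp hp).1.symm (hd h)
      have h1 : |d j - d p| ≠ 0 := abs_ne_zero.mpr (sub_ne_zero.mpr hne)
      have h2 : (1 + |d p|) ≠ 0 := by positivity
      field_simp
    apply le_csInf hAne
    rintro b ⟨x, hx, rfl⟩
    set y : Fin n → ℝ := (Matrix.of fun i j : Fin n => d j ^ (i : ℕ)).mulVec x with hy
    set r : ℝ := Real.sqrt (∑ i : Fin n, y i ^ 2) with hr
    have hr0 : 0 ≤ r := Real.sqrt_nonneg _
    have hyr : ∀ i, |y i| ≤ r := by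
      intro i
      rw [← Real.sqrt_sq_eq_abs]
      exact Real.sqrt_le_sqrt
        (Finset.single_le_sum (fun k _ => sq_nonneg (y k)) (Finset.mem_univ i))
    set ℓ : Fin n → Polynomial ℝ := fun j => Lagrange.basis Finset.univ d j with hℓ
    have hdeg : ∀ j, (ℓ j).natDegree < n := by
      intro j
      simp only [hℓ]
      rw [Lagrange.natDegree_basis (Set.injOn_of_injective hd) (Finset.mem_univ j)]
      simp only [Finset.card_univ, Fintype.card_fin]
      omega
    have keval : ∀ j k : Fin n,
        (∑ i : Fin n, (ℓ j).coeff i * d k ^ (i : ℕ)) = if k = j then 1 else 0 := by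
      intro j k
      rw [Fin.sum_univ_eq_sum_range (fun i => (ℓ j).coeff i * d k ^ i) n]
      rw [← Polynomial.eval_eq_sum_range' (hdeg j)]
      by_cases h : k = j
      · subst h
        rw [if_pos rfl]
        exact Lagrange.eval_basis_self (Set.injOn_of_injective hd) (Finset.mem_univ k)
      · rw [if_neg h]
        exact Lagrange.eval_basis_of_ne (fun hh => h hh.symm) (Finset.mem_univ k)
    have key : ∀ j, x j = ∑ i : Fin n, (ℓ j).coeff i * y i := by
      intro j
      have h5 : ∑ i : Fin n, (ℓ j).coeff i * y i
          = ∑ k : Fin n, (∑ i : Fin n, (ℓ j).coeff i * d k ^ (i : ℕ)) * x k := by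
        simp only [hy, Matrix.mulVec, dotProduct, Matrix.of_apply, Finset.mul_sum,
          Finset.sum_mul]
        rw [Finset.sum_comm]
        exact Finset.sum_congr rfl fun k _ => Finset.sum_congr rfl fun i _ => by ring
      rw [h5]
      simp only [keval, ite_mul, one_mul, zero_mul]
      rw [Finset.sum_ite_eq' Finset.univ j x]
      simp
    have hcb : ∀ j, (∑ i : Fin n, |(ℓ j).coeff i|) ≤ c j := by
      intro j
      rw [Fin.sum_univ_eq_sum_range (fun i => |(ℓ j).coeff i|) n]
      have hbe := basis_eq_C_mul Finset.univ d j
      have hKnn : (0:ℝ) ≤ ∏ p ∈ Finset.univ.erase j, |d j - d p|⁻¹ :=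
        Finset.prod_nonneg fun p _ => by positivity
      calc ∑ i ∈ Finset.range n, |(ℓ j).coeff i|
          = (∏ p ∈ Finset.univ.erase j, |d j - d p|⁻¹) *
            ∑ i ∈ Finset.range n,
              |(∏ p ∈ Finset.univ.erase j, (Polynomial.X - Polynomial.C (d p))).coeff i| := by
            rw [Finset.mul_sum]
            apply Finset.sum_congr rfl
            intro i _
            simp only [hℓ]
            rw [hbe, Polynomial.coeff_C_mul, abs_mul, Finset.abs_prod]
            congr 1
            exact Finset.prod_congr rfl fun p _ => abs_inv _
        _ ≤ (∏ p ∈ Finset.univ.erase j, |d j - d p|⁻¹) *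
            ∏ p ∈ Finset.univ.erase j, (1 + |d p|) :=
            mul_le_mul_of_nonneg_left (absCoeffSum_prod _ d n) hKnn
        _ = c j := by
            simp only [hc]
            rw [← Finset.prod_mul_distrib]
            exact Finset.prod_congr rfl fun p _ => by rw [div_eq_mul_inv, mul_comm]
    have hxr : ∀ j, |x j| ≤ c j * r := by
      intro j
      rw [key j]
      calc |∑ i : Fin n, (ℓ j).coeff i * y i| ≤ ∑ i : Fin n, |(ℓ j).coeff i * y i| :=
            Finset.abs_sum_le_sum_abs _ _
        _ = ∑ i : Fin n, |(ℓ j).coeff i| * |y i| := by simp [abs_mul]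
        _ ≤ ∑ i : Fin n, |(ℓ j).coeff i| * r :=
            Finset.sum_le_sum fun i _ => mul_le_mul_of_nonneg_left (hyr i) (abs_nonneg _)
        _ = (∑ i : Fin n, |(ℓ j).coeff i|) * r := (Finset.sum_mul _ _ _).symm
        _ ≤ c j * r := mul_le_mul_of_nonneg_right (hcb j) hr0
    obtain ⟨j₀, _, hj₀⟩ := Finset.exists_max_image Finset.univ c ⟨⟨0, hn⟩, Finset.mem_univ _⟩
    have hsum : (1:ℝ) ≤ n * (c j₀ * r) ^ 2 := by
      have h2 : ∑ j : Fin n, x j ^ 2 ≤ ∑ _j : Fin n, (c j₀ * r) ^ 2 := by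
        apply Finset.sum_le_sum
        intro j _
        have h6 := hxr j
        have h3 : c j * r ≤ c j₀ * r :=
          mul_le_mul_of_nonneg_right (hj₀ j (Finset.mem_univ j)) hr0
        nlinarith [abs_nonneg (x j), sq_abs (x j)]
      rw [Finset.sum_const, Finset.card_univ, Fintype.card_fin, nsmul_eq_mul] at h2
      linarith [hx ▸ h2]
    have hsq : Real.sqrt n ^ 2 = (n:ℝ) := Real.sq_sqrt (Nat.cast_nonneg n)
    have hsqpos : 0 < Real.sqrt n := Real.sqrt_pos.mpr (by exact_mod_cast hn)
    have hcj : 0 < c j₀ := hcpos j₀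
    have ht2 : (Real.sqrt n * c j₀ * r) ^ 2 = n * (c j₀ * r) ^ 2 := by
      rw [mul_pow, mul_pow, hsq]; ring
    have ht0 : 0 ≤ Real.sqrt n * c j₀ * r := by positivity
    have h4 : 1 ≤ Real.sqrt n * c j₀ * r := by
      nlinarith [hsum, ht2, ht0, sq_nonneg (Real.sqrt n * c j₀ * r - 1)]
    have hmf : m ≤ (c j₀)⁻¹ := (hfc j₀) ▸ Finset.inf'_le f (Finset.mem_univ j₀)
    have hstep : (c j₀)⁻¹ ≤ r * Real.sqrt n := by
      have hinv : c j₀ * (c j₀)⁻¹ = 1 := mul_inv_cancel₀ hcj.ne'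
      nlinarith [mul_le_mul_of_nonneg_left h4 (inv_nonneg.mpr hcj.le), hinv, hr0, hsqpos.le]
    rw [div_mul_eq_mul_div, one_mul, div_le_iff₀ hsqpos]
    calc m ≤ (c j₀)⁻¹ := hmf
      _ ≤ r * Real.sqrt n := hstep
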